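/- Let r ≥ 2 be an integer. An r-uniform hypergraph F with exactly three edges and minimum degree at least 2 (after removing isolated vertices) is isomorphic to the r-suspension T̂_{2i}^r of the expanded triangle T_{2i} for some integer i with 1 ≤ i ≤ ⌊r/2⌋; conversely, for every 1 ≤ i ≤ ⌊r/2⌋, the r-graph T̂_{2i}^r has exactly three edges and minimum degree at least 2. -/

import Mathlib

open Filter

/-- The degree of a vertex in a hypergraph given as a finite set of edges. -/
def hypDegree {V : Type*} [DecidableEq V] (F : Finset (Finset V)) (v : V) : ℕ :=
  (F.filter fun e => v ∈ e).card

/-- `H` contains a copy of `F`: a map injective on the vertex support of `F`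
sending every edge of `F` to an edge of `H`. -/
def HasCopy {V W : Type*} [DecidableEq V] (H : Finset (Finset V))
    (F : Finset (Finset W)) : Prop :=
  ∃ φ : W → V, Set.InjOn φ (⋃ e ∈ F, (e : Set W)) ∧ ∀ e ∈ F, e.image φ ∈ H

/-- `F` is isomorphic to `G` (as edge sets; isolated vertices are irrelevant). -/
def IsIsoTo {V W : Type*} [DecidableEq V] (F : Finset (Finset W))
    (G : Finset (Finset V)) : Prop :=
  ∃ φ : W → V, Set.InjOn φ (⋃ e ∈ F, (e : Set W)) ∧ F.image (fun e => e.image φ) = G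

open scoped Classical in
/-- The Turán number `ex(n, F)`: the maximum number of edges of an `F`-free
`r`-uniform hypergraph on `n` vertices. -/
noncomputable def exNum (r n : ℕ) {m : ℕ} (F : Finset (Finset (Fin m))) : ℕ :=
  ((Finset.univ : Finset (Finset (Finset (Fin n)))).filter fun H =>
    (∀ e ∈ H, e.card = r) ∧ ¬ HasCopy H F).sup Finset.card

/-- The Turán density `π(F) = lim_{n → ∞} ex(n,F) / C(n,r)` (the limit exists). -/
noncomputable def turanDensity (r : ℕ) {m : ℕ} (F : Finset (Finset (Fin m))) : ℝ :=
  limUnder atTop fun n : ℕ => (exNum r n F : ℝ) / (n.choose r : ℝ)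

/-- `γ(r)`: the maximum Turán density of an `r`-uniform hypergraph with exactly
three edges. -/
noncomputable def gammaT (r : ℕ) : ℝ :=
  sSup {x : ℝ | ∃ (m : ℕ) (F : Finset (Finset (Fin m))),
    (∀ e ∈ F, e.card = r) ∧ F.card = 3 ∧ turanDensity r F = x}

/-- The expanded triangle `T_{2k}` on `3k` vertices: three pairwise disjoint
`k`-sets `S 0, S 1, S 2`, with edges `S 0 ∪ S 1`, `S 1 ∪ S 2`, `S 2 ∪ S 0`. -/
def expTriangle (k : ℕ) : Finset (Finset (Fin (3 * k))) :=
  let S : ℕ → Finset (Fin (3 * k)) :=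
    fun a => Finset.univ.filter fun v => a * k ≤ v.val ∧ v.val < (a + 1) * k
  {S 0 ∪ S 1, S 1 ∪ S 2, S 2 ∪ S 0}

/-- The suspension of a hypergraph: add the same set of `t` new cone vertices
to every edge.  For an `s`-graph `F`, the `r`-suspension `F̂^r` is `suspend (r - s) F`. -/
def suspend {m : ℕ} (t : ℕ) (F : Finset (Finset (Fin m))) :
    Finset (Finset (Fin (m + t))) :=
  F.image fun e =>
    e.image (Fin.castAdd t) ∪ Finset.univ.filter fun v : Fin (m + t) => m ≤ v.val

open Finset in
private lemma card_filter_val' (n : ℕ) (p : ℕ → Prop) [DecidablePred p] :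
    (Finset.univ.filter (fun v : Fin n => p v.val)).card
      = ((Finset.range n).filter p).card := by
  apply Finset.card_nbij (fun v => v.val)
  · intro v hv; simp only [mem_coe, mem_filter, mem_univ, true_and] at hv
    simp only [mem_coe, mem_filter, mem_range]; exact ⟨v.isLt, hv⟩
  · intro a _ b _ h; exact Fin.val_injective h
  · intro x hx; simp only [Finset.coe_filter, Set.mem_setOf_eq, mem_range] at hx
    exact ⟨⟨x, hx.1⟩, by simp [hx.2], rfl⟩

open Finset in
private lemma Ecard1 (i t : ℕ) :
    (Finset.univ.filter (fun v : Fin (3*i+t) => v.val < 2*i ∨ 3*i ≤ v.val)).card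
      = 2*i + t := by
  rw [card_filter_val' (3*i+t) (fun x => x < 2*i ∨ 3*i ≤ x)]
  have h : ((Finset.range (3*i+t)).filter (fun x => x < 2*i ∨ 3*i ≤ x))
      = Finset.range (2*i) ∪ Finset.Ico (3*i) (3*i+t) := by
    ext x; simp only [mem_filter, mem_range, mem_union, mem_Ico]; omega
  rw [h, Finset.card_union_of_disjoint, Finset.card_range, Nat.card_Ico]
  · omega
  · rw [Finset.disjoint_left]; intro a ha hb
    simp only [mem_range] at ha; simp only [mem_Ico] at hb; omega

open Finset in
private lemma Ecard2 (i t : ℕ) :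
    (Finset.univ.filter (fun v : Fin (3*i+t) => i ≤ v.val)).card = 2*i + t := by
  rw [card_filter_val' (3*i+t) (fun x => i ≤ x)]
  have h : ((Finset.range (3*i+t)).filter (fun x => i ≤ x)) = Finset.Ico i (3*i+t) := by
    ext x; simp only [mem_filter, mem_range, mem_Ico]; omega
  rw [h, Nat.card_Ico]; omega

open Finset in
private lemma Ecard3 (i t : ℕ) :
    (Finset.univ.filter (fun v : Fin (3*i+t) => v.val < i ∨ 2*i ≤ v.val)).card
      = 2*i + t := by
  rw [card_filter_val' (3*i+t) (fun x => x < i ∨ 2*i ≤ x)]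
  have h : ((Finset.range (3*i+t)).filter (fun x => x < i ∨ 2*i ≤ x))
      = Finset.range i ∪ Finset.Ico (2*i) (3*i+t) := by
    ext x; simp only [mem_filter, mem_range, mem_union, mem_Ico]; omega
  rw [h, Finset.card_union_of_disjoint, Finset.card_range, Nat.card_Ico]
  · omega
  · rw [Finset.disjoint_left]; intro a ha hb
    simp only [mem_range] at ha; simp only [mem_Ico] at hb; omega

open Finset in
private lemma suspend_expTriangle (i t : ℕ) :
    suspend t (expTriangle i) =
      {Finset.univ.filter (fun v : Fin (3*i+t) => v.val < 2*i ∨ 3*i ≤ v.val),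
       Finset.univ.filter (fun v : Fin (3*i+t) => i ≤ v.val),
       Finset.univ.filter (fun v : Fin (3*i+t) => v.val < i ∨ 2*i ≤ v.val)} := by
  have key : ∀ (p q : ℕ → Prop) [DecidablePred p] [DecidablePred q],
      (∀ x, x < 3*i → (p x ↔ q x)) → (∀ x, 3*i ≤ x → q x) →
      ((Finset.univ.filter fun v : Fin (3*i) => p v.val).image (Fin.castAdd t)
        ∪ Finset.univ.filter (fun v : Fin (3*i+t) => 3*i ≤ v.val))
      = Finset.univ.filter (fun v : Fin (3*i+t) => q v.val) := by
    intro p q _ _ hpq hq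
    ext v
    simp only [mem_union, mem_image, mem_filter, mem_univ, true_and]
    constructor
    · rintro (⟨a, ha, rfl⟩ | h)
      · have hval : (Fin.castAdd t a).val = a.val := rfl
        rw [hval]
        exact (hpq a.val a.isLt).mp ha
      · exact hq _ h
    · intro h
      by_cases hv : v.val < 3*i
      · exact Or.inl ⟨⟨v.val, hv⟩, (hpq v.val hv).mpr h, Fin.ext rfl⟩
      · exact Or.inr (by omega)
  unfold suspend expTriangle
  simp only [Finset.image_insert, Finset.image_singleton]
  rw [← Finset.filter_or, ← Finset.filter_or, ← Finset.filter_or]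
  rw [key (fun x => 0*i ≤ x ∧ x < (0+1)*i ∨ 1*i ≤ x ∧ x < (1+1)*i) (fun x => x < 2*i ∨ 3*i ≤ x)
        (by intro x hx; omega) (by intro x hx; omega),
      key (fun x => 1*i ≤ x ∧ x < (1+1)*i ∨ 2*i ≤ x ∧ x < (2+1)*i) (fun x => i ≤ x)
        (by intro x hx; omega) (by intro x hx; omega),
      key (fun x => 2*i ≤ x ∧ x < (2+1)*i ∨ 0*i ≤ x ∧ x < (0+1)*i) (fun x => x < i ∨ 2*i ≤ x)
        (by intro x hx; omega) (by intro x hx; omega)]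

open Finset in
private lemma Edist (i t : ℕ) (hi : 1 ≤ i) :
    (Finset.univ.filter (fun v : Fin (3*i+t) => v.val < 2*i ∨ 3*i ≤ v.val)
      ≠ Finset.univ.filter (fun v : Fin (3*i+t) => i ≤ v.val)) ∧
    (Finset.univ.filter (fun v : Fin (3*i+t) => v.val < 2*i ∨ 3*i ≤ v.val)
      ≠ Finset.univ.filter (fun v : Fin (3*i+t) => v.val < i ∨ 2*i ≤ v.val)) ∧
    (Finset.univ.filter (fun v : Fin (3*i+t) => i ≤ v.val)
      ≠ Finset.univ.filter (fun v : Fin (3*i+t) => v.val < i ∨ 2*i ≤ v.val)) := by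
  have h0 : (0 : ℕ) < 3*i+t := by omega
  have hii : i < 3*i+t := by omega
  refine ⟨fun h => ?_, fun h => ?_, fun h => ?_⟩
  · have := Finset.ext_iff.mp h ⟨0, h0⟩
    simp only [mem_filter, mem_univ, true_and] at this; omega
  · have := Finset.ext_iff.mp h ⟨i, hii⟩
    simp only [mem_filter, mem_univ, true_and] at this; omega
  · have := Finset.ext_iff.mp h ⟨0, h0⟩
    simp only [mem_filter, mem_univ, true_and] at this; omega

private lemma iso_symm' {n m : ℕ} (F : Finset (Finset (Fin m))) (G : Finset (Finset (Fin n)))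
    (ψ : Fin n → Fin m) (hψ : Function.Injective ψ) (hn : 0 < n)
    (him : G.image (fun e => e.image ψ) = F) : IsIsoTo F G := by
  have : Nonempty (Fin n) := ⟨⟨0, hn⟩⟩
  classical
  refine ⟨Function.invFun ψ, ?_, ?_⟩
  · intro x hx y hy h
    have hr : ∀ z, z ∈ (⋃ e ∈ F, (e : Set (Fin m))) → ∃ a, ψ a = z := by
      intro z hz
      simp only [Set.mem_iUnion, Finset.mem_coe] at hz
      obtain ⟨e, heF, hze⟩ := hz
      rw [← him, Finset.mem_image] at heF
      obtain ⟨g, hg, rfl⟩ := heF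
      rw [Finset.mem_image] at hze
      obtain ⟨u, _, rfl⟩ := hze
      exact ⟨u, rfl⟩
    obtain ⟨a, rfl⟩ := hr x hx
    obtain ⟨b, rfl⟩ := hr y hy
    rw [Function.leftInverse_invFun hψ a, Function.leftInverse_invFun hψ b] at h
    rw [h]
  · rw [← him, Finset.image_image]
    have hid : ∀ g ∈ G, ((fun e => Finset.image (Function.invFun ψ) e) ∘
        fun e => Finset.image ψ e) g = id g := by
      intro g _
      simp only [Function.comp_apply, Finset.image_image, id]
      have hcomp : (Function.invFun ψ ∘ ψ) = id := funext (Function.leftInverse_invFun hψ)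
      rw [hcomp, Finset.image_id]
    rw [Finset.image_congr hid, Finset.image_id]

private lemma sub_of_deg {m : ℕ} (F : Finset (Finset (Fin m))) (a b c : Finset (Fin m))
    (hF : F = {a, b, c}) (hdeg : ∀ v, (∃ e ∈ F, v ∈ e) → 2 ≤ hypDegree F v) :
    a ⊆ b ∪ c := by
  intro v hv
  have h := hdeg v ⟨a, by rw [hF]; simp, hv⟩
  rw [Finset.mem_union]
  by_contra hnc
  push_neg at hnc
  have hsub : F.filter (fun e => v ∈ e) ⊆ {a} := by
    intro e he
    rw [Finset.mem_filter, hF, Finset.mem_insert, Finset.mem_insert,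
      Finset.mem_singleton] at he
    rcases he.1 with rfl | rfl | rfl
    · exact Finset.mem_singleton_self _
    · exact absurd he.2 hnc.1
    · exact absurd he.2 hnc.2
  have hle := Finset.card_le_card hsub
  rw [Finset.card_singleton] at hle
  unfold hypDegree at h
  omega

set_option maxHeartbeats 1000000 in
private lemma forward_aux {m : ℕ} (r : ℕ) (e1 e2 e3 : Finset (Fin m))
    (h1 : e1.card = r) (h2 : e2.card = r) (h3 : e3.card = r)
    (h12 : e1 ≠ e2) (_h13 : e1 ≠ e3) (_h23 : e2 ≠ e3)
    (hs1 : e1 ⊆ e2 ∪ e3) (hs2 : e2 ⊆ e1 ∪ e3) (hs3 : e3 ⊆ e1 ∪ e2) :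
    ∃ i, 1 ≤ i ∧ 2*i ≤ r ∧
      IsIsoTo ({e1, e2, e3} : Finset (Finset (Fin m))) (suspend (r - 2*i) (expTriangle i)) := by
  classical
  set C := e1 ∩ e2 ∩ e3 with hC
  set A := (e1 ∩ e2) \ C with hA
  set B := (e2 ∩ e3) \ C with hB
  set D := (e1 ∩ e3) \ C with hD
  have he1 : e1 = A ∪ D ∪ C := by
    ext v
    have hv := @hs1 v
    simp only [hA, hD, hC, Finset.mem_union, Finset.mem_sdiff, Finset.mem_inter] at hv ⊢
    tauto
  have he2 : e2 = A ∪ B ∪ C := by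
    ext v
    have hv := @hs2 v
    simp only [hA, hB, hC, Finset.mem_union, Finset.mem_sdiff, Finset.mem_inter] at hv ⊢
    tauto
  have he3 : e3 = B ∪ D ∪ C := by
    ext v
    have hv := @hs3 v
    simp only [hB, hD, hC, Finset.mem_union, Finset.mem_sdiff, Finset.mem_inter] at hv ⊢
    tauto
  have dAB : Disjoint A B := by
    rw [Finset.disjoint_left]; intro a ha hb
    simp only [hA, hB, hC, Finset.mem_sdiff, Finset.mem_inter] at ha hb
    tauto
  have dAD : Disjoint A D := by
    rw [Finset.disjoint_left]; intro a ha hb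
    simp only [hA, hD, hC, Finset.mem_sdiff, Finset.mem_inter] at ha hb
    tauto
  have dBD : Disjoint B D := by
    rw [Finset.disjoint_left]; intro a ha hb
    simp only [hB, hD, hC, Finset.mem_sdiff, Finset.mem_inter] at ha hb
    tauto
  have dAC : Disjoint A C := Finset.sdiff_disjoint
  have dBC : Disjoint B C := Finset.sdiff_disjoint
  have dDC : Disjoint D C := Finset.sdiff_disjoint
  have hcard1 : r = A.card + D.card + C.card := by
    rw [← h1, he1, Finset.card_union_of_disjoint
      (Finset.disjoint_union_left.mpr ⟨dAC, dDC⟩), Finset.card_union_of_disjoint dAD]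
  have hcard2 : r = A.card + B.card + C.card := by
    rw [← h2, he2, Finset.card_union_of_disjoint
      (Finset.disjoint_union_left.mpr ⟨dAC, dBC⟩), Finset.card_union_of_disjoint dAB]
  have hcard3 : r = B.card + D.card + C.card := by
    rw [← h3, he3, Finset.card_union_of_disjoint
      (Finset.disjoint_union_left.mpr ⟨dBC, dDC⟩), Finset.card_union_of_disjoint dBD]
  have hBcard : B.card = A.card := by omega
  have hDcard : D.card = A.card := by omega
  have hCcard : C.card = r - 2*A.card := by omega
  have h2i : 2*A.card ≤ r := by omega
  have hi1 : 1 ≤ A.card := by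
    by_contra hcon
    have hA0 : A = ∅ := by rw [← Finset.card_eq_zero]; omega
    have hB0 : B = ∅ := by rw [← Finset.card_eq_zero]; omega
    have hD0 : D = ∅ := by rw [← Finset.card_eq_zero]; omega
    apply h12
    rw [he1, he2, hA0, hB0, hD0]
  refine ⟨A.card, hi1, h2i, ?_⟩
  -- build ψ
  have hnpos : 0 < 3*A.card + (r - 2*A.card) := by omega
  let fA := A.orderIsoOfFin rfl
  let fB := B.orderIsoOfFin hBcard
  let fD := D.orderIsoOfFin hDcard
  let fC := C.orderIsoOfFin hCcard
  set ψ : Fin (3*A.card + (r - 2*A.card)) → Fin m := fun v =>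
    if hv1 : v.val < A.card then (fA ⟨v.val, hv1⟩ : Fin m)
    else if hv2 : v.val < 2*A.card then (fB ⟨v.val - A.card, by omega⟩ : Fin m)
    else if hv3 : v.val < 3*A.card then (fD ⟨v.val - 2*A.card, by omega⟩ : Fin m)
    else (fC ⟨v.val - 3*A.card, by have := v.isLt; omega⟩ : Fin m) with hψdef
  -- membership facts
  have hmA : ∀ v : Fin (3*A.card + (r - 2*A.card)), v.val < A.card → ψ v ∈ A := by
    intro v hv
    show (if hv1 : v.val < A.card then (fA ⟨v.val, hv1⟩ : Fin m) else _) ∈ A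
    rw [dif_pos hv]; exact Finset.coe_mem _
  have hmB : ∀ v : Fin (3*A.card + (r - 2*A.card)),
      A.card ≤ v.val → v.val < 2*A.card → ψ v ∈ B := by
    intro v hv hv'
    show (if hv1 : v.val < A.card then (fA ⟨v.val, hv1⟩ : Fin m) else _) ∈ B
    rw [dif_neg (by omega), dif_pos hv']; exact Finset.coe_mem _
  have hmD : ∀ v : Fin (3*A.card + (r - 2*A.card)),
      2*A.card ≤ v.val → v.val < 3*A.card → ψ v ∈ D := by
    intro v hv hv'
    show (if hv1 : v.val < A.card then (fA ⟨v.val, hv1⟩ : Fin m) else _) ∈ D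
    rw [dif_neg (by omega), dif_neg (by omega), dif_pos hv']; exact Finset.coe_mem _
  have hmC : ∀ v : Fin (3*A.card + (r - 2*A.card)), 3*A.card ≤ v.val → ψ v ∈ C := by
    intro v hv
    show (if hv1 : v.val < A.card then (fA ⟨v.val, hv1⟩ : Fin m) else _) ∈ C
    rw [dif_neg (by omega), dif_neg (by omega), dif_neg (by omega)]; exact Finset.coe_mem _
  -- value facts
  have hvA : ∀ (v : Fin (3*A.card + (r - 2*A.card))) (hv : v.val < A.card),
      ψ v = (fA ⟨v.val, hv⟩ : Fin m) := by
    intro v hv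
    show (if hv1 : v.val < A.card then (fA ⟨v.val, hv1⟩ : Fin m) else _) = _
    rw [dif_pos hv]
  have hvB : ∀ (v : Fin (3*A.card + (r - 2*A.card))) (h1 : A.card ≤ v.val)
      (hv : v.val < 2*A.card), ψ v = (fB ⟨v.val - A.card, by omega⟩ : Fin m) := by
    intro v h1 hv
    show (if hv1 : v.val < A.card then (fA ⟨v.val, hv1⟩ : Fin m) else _) = _
    rw [dif_neg (by omega), dif_pos hv]
  have hvD : ∀ (v : Fin (3*A.card + (r - 2*A.card))) (h1 : 2*A.card ≤ v.val)
      (hv : v.val < 3*A.card), ψ v = (fD ⟨v.val - 2*A.card, by omega⟩ : Fin m) := by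
    intro v h1 hv
    show (if hv1 : v.val < A.card then (fA ⟨v.val, hv1⟩ : Fin m) else _) = _
    rw [dif_neg (by omega), dif_neg (by omega), dif_pos hv]
  have hvC : ∀ (v : Fin (3*A.card + (r - 2*A.card))) (h1 : 3*A.card ≤ v.val),
      ψ v = (fC ⟨v.val - 3*A.card, by have := v.isLt; omega⟩ : Fin m) := by
    intro v h1
    show (if hv1 : v.val < A.card then (fA ⟨v.val, hv1⟩ : Fin m) else _) = _
    rw [dif_neg (by omega), dif_neg (by omega), dif_neg (by omega)]
  have hinj : Function.Injective ψ := by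
    intro u v h
    apply Fin.ext
    rcases Nat.lt_or_ge u.val A.card with u1 | u1
    · rcases Nat.lt_or_ge v.val A.card with v1 | v1
      · rw [hvA u u1, hvA v v1] at h
        have := fA.injective (Subtype.ext h)
        rwa [Fin.mk.injEq] at this
      · rcases Nat.lt_or_ge v.val (2*A.card) with v2 | v2
        · exact absurd (hmB v v1 v2) (h ▸ Finset.disjoint_left.mp dAB (hmA u u1))
        · rcases Nat.lt_or_ge v.val (3*A.card) with v3 | v3
          · exact absurd (hmD v v2 v3) (h ▸ Finset.disjoint_left.mp dAD (hmA u u1))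
          · exact absurd (hmC v v3) (h ▸ Finset.disjoint_left.mp dAC (hmA u u1))
    · rcases Nat.lt_or_ge u.val (2*A.card) with u2 | u2
      · rcases Nat.lt_or_ge v.val A.card with v1 | v1
        · exact absurd (hmA v v1) (h ▸ Finset.disjoint_left.mp dAB.symm (hmB u u1 u2))
        · rcases Nat.lt_or_ge v.val (2*A.card) with v2 | v2
          · rw [hvB u u1 u2, hvB v v1 v2] at h
            have := fB.injective (Subtype.ext h)
            rw [Fin.mk.injEq] at this; omega
          · rcases Nat.lt_or_ge v.val (3*A.card) with v3 | v3
            · exact absurd (hmD v v2 v3) (h ▸ Finset.disjoint_left.mp dBD (hmB u u1 u2))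
            · exact absurd (hmC v v3) (h ▸ Finset.disjoint_left.mp dBC (hmB u u1 u2))
      · rcases Nat.lt_or_ge u.val (3*A.card) with u3 | u3
        · rcases Nat.lt_or_ge v.val A.card with v1 | v1
          · exact absurd (hmA v v1) (h ▸ Finset.disjoint_left.mp dAD.symm (hmD u u2 u3))
          · rcases Nat.lt_or_ge v.val (2*A.card) with v2 | v2
            · exact absurd (hmB v v1 v2) (h ▸ Finset.disjoint_left.mp dBD.symm (hmD u u2 u3))
            · rcases Nat.lt_or_ge v.val (3*A.card) with v3 | v3
              · rw [hvD u u2 u3, hvD v v2 v3] at h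
                have := fD.injective (Subtype.ext h)
                rw [Fin.mk.injEq] at this; omega
              · exact absurd (hmC v v3) (h ▸ Finset.disjoint_left.mp dDC (hmD u u2 u3))
        · rcases Nat.lt_or_ge v.val A.card with v1 | v1
          · exact absurd (hmA v v1) (h ▸ Finset.disjoint_left.mp dAC.symm (hmC u u3))
          · rcases Nat.lt_or_ge v.val (2*A.card) with v2 | v2
            · exact absurd (hmB v v1 v2) (h ▸ Finset.disjoint_left.mp dBC.symm (hmC u u3))
            · rcases Nat.lt_or_ge v.val (3*A.card) with v3 | v3
              · exact absurd (hmD v v2 v3) (h ▸ Finset.disjoint_left.mp dDC.symm (hmC u u3))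
              · rw [hvC u u3, hvC v v3] at h
                have := fC.injective (Subtype.ext h)
                rw [Fin.mk.injEq] at this; omega
  -- image equalities
  have him1 : (Finset.univ.filter
      (fun v : Fin (3*A.card + (r - 2*A.card)) => v.val < 2*A.card ∨ 3*A.card ≤ v.val)).image ψ
      = e2 := by
    apply Finset.eq_of_subset_of_card_le
    · intro y hy
      rw [Finset.mem_image] at hy
      obtain ⟨v, hv, rfl⟩ := hy
      simp only [Finset.mem_filter, Finset.mem_univ, true_and] at hv
      rw [he2]
      simp only [Finset.mem_union]
      rcases Nat.lt_or_ge v.val A.card with h' | h'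
      · exact Or.inl (Or.inl (hmA v h'))
      · rcases Nat.lt_or_ge v.val (2*A.card) with h'' | h''
        · exact Or.inl (Or.inr (hmB v h' h''))
        · exact Or.inr (hmC v (by omega))
    · rw [h2, Finset.card_image_of_injective _ hinj,
        Ecard1 A.card (r - 2*A.card)]
      omega
  have him2 : (Finset.univ.filter
      (fun v : Fin (3*A.card + (r - 2*A.card)) => A.card ≤ v.val)).image ψ = e3 := by
    apply Finset.eq_of_subset_of_card_le
    · intro y hy
      rw [Finset.mem_image] at hy
      obtain ⟨v, hv, rfl⟩ := hy
      simp only [Finset.mem_filter, Finset.mem_univ, true_and] at hv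
      rw [he3]
      simp only [Finset.mem_union]
      rcases Nat.lt_or_ge v.val (2*A.card) with h' | h'
      · exact Or.inl (Or.inl (hmB v hv h'))
      · rcases Nat.lt_or_ge v.val (3*A.card) with h'' | h''
        · exact Or.inl (Or.inr (hmD v h' h''))
        · exact Or.inr (hmC v h'')
    · rw [h3, Finset.card_image_of_injective _ hinj,
        Ecard2 A.card (r - 2*A.card)]
      omega
  have him3 : (Finset.univ.filter
      (fun v : Fin (3*A.card + (r - 2*A.card)) => v.val < A.card ∨ 2*A.card ≤ v.val)).image ψ
      = e1 := by
    apply Finset.eq_of_subset_of_card_le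
    · intro y hy
      rw [Finset.mem_image] at hy
      obtain ⟨v, hv, rfl⟩ := hy
      simp only [Finset.mem_filter, Finset.mem_univ, true_and] at hv
      rw [he1]
      simp only [Finset.mem_union]
      rcases Nat.lt_or_ge v.val A.card with h' | h'
      · exact Or.inl (Or.inl (hmA v h'))
      · rcases Nat.lt_or_ge v.val (3*A.card) with h'' | h''
        · exact Or.inl (Or.inr (hmD v (by omega) h''))
        · exact Or.inr (hmC v h'')
    · rw [h1, Finset.card_image_of_injective _ hinj,
        Ecard3 A.card (r - 2*A.card)]
      omega
  apply iso_symm' _ _ ψ hinj hnpos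
  rw [suspend_expTriangle, Finset.image_insert, Finset.image_insert,
    Finset.image_singleton, him1, him2, him3]
  ext e
  simp only [Finset.mem_insert, Finset.mem_singleton]
  tauto

/-- For `r ≥ 2`: an `r`-graph with exactly three edges and minimum degree at
least `2` (over vertices of positive degree) is isomorphic to `T̂_{2i}^r` for
some `1 ≤ i ≤ ⌊r/2⌋`; conversely every such `T̂_{2i}^r` is an `r`-graph with
exactly three edges and minimum degree at least `2`. -/
theorem describe_T2 (r : ℕ) (hr : 2 ≤ r) :
    (∀ (m : ℕ) (F : Finset (Finset (Fin m))),
      (∀ e ∈ F, e.card = r) → F.card = 3 →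
      (∀ v, (∃ e ∈ F, v ∈ e) → 2 ≤ hypDegree F v) →
      ∃ i : ℕ, 1 ≤ i ∧ i ≤ r / 2 ∧ IsIsoTo F (suspend (r - 2 * i) (expTriangle i))) ∧
    (∀ i : ℕ, 1 ≤ i → i ≤ r / 2 →
      (∀ e ∈ suspend (r - 2 * i) (expTriangle i), e.card = r) ∧
      (suspend (r - 2 * i) (expTriangle i)).card = 3 ∧
      (∀ v, (∃ e ∈ suspend (r - 2 * i) (expTriangle i), v ∈ e) →
        2 ≤ hypDegree (suspend (r - 2 * i) (expTriangle i)) v)) := by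
  constructor
  · -- forward direction
    intro m F hcard hthree hdeg
    obtain ⟨e1, e2, e3, h12, h13, h23, hF⟩ := Finset.card_eq_three.mp hthree
    have hF2 : F = {e2, e1, e3} := by rw [hF]; ext e; simp; tauto
    have hF3 : F = {e3, e1, e2} := by rw [hF]; ext e; simp; tauto
    have hs1 : e1 ⊆ e2 ∪ e3 := sub_of_deg F e1 e2 e3 hF hdeg
    have hs2 : e2 ⊆ e1 ∪ e3 := sub_of_deg F e2 e1 e3 hF2 hdeg
    have hs3 : e3 ⊆ e1 ∪ e2 := sub_of_deg F e3 e1 e2 hF3 hdeg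
    obtain ⟨i, hi1, hi2, hiso⟩ := forward_aux r e1 e2 e3
      (hcard e1 (by rw [hF]; simp)) (hcard e2 (by rw [hF]; simp))
      (hcard e3 (by rw [hF]; simp)) h12 h13 h23 hs1 hs2 hs3
    exact ⟨i, hi1, by omega, by rwa [hF]⟩
  · -- backward direction
    intro i h1 h2
    set t := r - 2*i with ht
    have h2i : 2*i ≤ r := by
      have := Nat.div_mul_le_self r 2
      omega
    rw [suspend_expTriangle]
    obtain ⟨d12, d13, d23⟩ := Edist i t h1
    refine ⟨?_, ?_, ?_⟩
    · intro e he
      simp only [Finset.mem_insert, Finset.mem_singleton] at he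
      rcases he with rfl | rfl | rfl
      · rw [Ecard1]; omega
      · rw [Ecard2]; omega
      · rw [Ecard3]; omega
    · rw [Finset.card_insert_of_notMem, Finset.card_insert_of_notMem,
        Finset.card_singleton]
      · simp only [Finset.mem_singleton]; exact d23
      · simp only [Finset.mem_insert, Finset.mem_singleton]; push_neg
        exact ⟨d12, d13⟩
    · intro v _
      unfold hypDegree
      have key : ∀ (G : Finset (Finset (Fin (3*i+t)))) (Ea Eb : Finset (Fin (3*i+t))),
          Ea ≠ Eb → Ea ∈ G → Eb ∈ G → v ∈ Ea → v ∈ Eb →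
          2 ≤ (G.filter (fun e => v ∈ e)).card := by
        intro G Ea Eb hne ha hb hva hvb
        have hsub : ({Ea, Eb} : Finset _) ⊆ G.filter (fun e => v ∈ e) := by
          intro e he; simp only [Finset.mem_insert, Finset.mem_singleton] at he
          rcases he with rfl | rfl <;> simp only [Finset.mem_filter] <;>
            exact ⟨by assumption, by assumption⟩
        calc 2 = ({Ea, Eb} : Finset _).card := by
                  rw [Finset.card_insert_of_notMem (by simpa using hne),
                    Finset.card_singleton]
          _ ≤ _ := Finset.card_le_card hsub
      by_cases hv1 : v.val < i
      · exact key _ _ _ d13 (by simp) (by simp) (by simp; omega) (by simp; omega)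
      · by_cases hv2 : v.val < 3*i
        · by_cases hv3 : v.val < 2*i
          · exact key _ _ _ d12 (by simp) (by simp) (by simp; omega) (by simp; omega)
          · exact key _ _ _ d23 (by simp) (by simp) (by simp; omega) (by simp; omega)
        · exact key _ _ _ d12 (by simp) (by simp) (by simp; omega) (by simp; omega)
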